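/- Let (m_0, …, m_{n−1}) be a proto-characteristic sequence with n > 4, satisfying additionally m_h ≤ 2^{h−1} for all 1 ≤ h ≤ n−1 and the property that if m_h = 2^{h−1} then m_k = 2^{k−1} for all k ≤ h. If m_h > 2^{h−2} for some h ∈ {4, …, n−1}, then m_h = 2^{h−2} + 2^q for some q ∈ {0, …, h−2}. -/

import Mathlib

/-- A sequence `(m 0, …, m (n-1))` of nonnegative integers is proto-characteristic if:
`m 0 = 0`; there is `k₁` with `1 ≤ k₁ ≤ n - 1`, `m 1 = … = m k₁ = 1` and `m (k₁+1) > 1`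
if `k₁ < n - 1`; the sequence is non-decreasing; and (if `k₁ < n - 1`) there are
functions `t₁, t₂ : {k₁+1,…,n-1} → {1,…,n-1}` with `m (t₁ k) + m (t₂ k) = m k`,
`t₁ k, t₂ k < k`, and for `k₁ < h₁ < h₂ < n` at least one of `t₁ h₁ < t₁ h₂`,
`t₂ h₁ < t₂ h₂` holds. -/
def ProtoChar (n : ℕ) (m : ℕ → ℕ) : Prop :=
  2 ≤ n ∧ m 0 = 0 ∧
  ∃ k₁ : ℕ, 1 ≤ k₁ ∧ k₁ ≤ n - 1 ∧ (∀ i : ℕ, 1 ≤ i → i ≤ k₁ → m i = 1) ∧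
    (k₁ < n - 1 → 1 < m (k₁ + 1)) ∧
    (∀ i j : ℕ, i ≤ j → j ≤ n - 1 → m i ≤ m j) ∧
    (k₁ < n - 1 → ∃ t₁ t₂ : ℕ → ℕ,
      (∀ k : ℕ, k₁ < k → k < n →
        1 ≤ t₁ k ∧ t₁ k ≤ n - 1 ∧ 1 ≤ t₂ k ∧ t₂ k ≤ n - 1 ∧
        m (t₁ k) + m (t₂ k) = m k ∧ t₁ k < k ∧ t₂ k < k) ∧
      (∀ h₁ h₂ : ℕ, k₁ < h₁ → h₁ < h₂ → h₂ < n → t₁ h₁ < t₁ h₂ ∨ t₂ h₁ < t₂ h₂))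

/-- Large terms of a proto-characteristic sequence (with the standard bounds) are of
the form `2 ^ (h-2) + 2 ^ q`: if `n > 4`, `m h ≤ 2 ^ (h-1)` for `1 ≤ h ≤ n - 1`,
`m h = 2 ^ (h-1)` forces `m k = 2 ^ (k-1)` for all `k ≤ h`, and `m h > 2 ^ (h-2)`
for some `4 ≤ h ≤ n - 1`, then `m h = 2 ^ (h-2) + 2 ^ q` for some `q ≤ h - 2`. -/
theorem protoChar_large_term (n : ℕ) (m : ℕ → ℕ) (hn : 4 < n) (hM : ProtoChar n m)
    (hbound : ∀ h : ℕ, 1 ≤ h → h ≤ n - 1 → m h ≤ 2 ^ (h - 1))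
    (hmax : ∀ h : ℕ, 1 ≤ h → h ≤ n - 1 → m h = 2 ^ (h - 1) →
      ∀ k : ℕ, 1 ≤ k → k ≤ h → m k = 2 ^ (k - 1)) :
    ∀ h : ℕ, 4 ≤ h → h ≤ n - 1 → 2 ^ (h - 2) < m h →
      ∃ q : ℕ, q ≤ h - 2 ∧ m h = 2 ^ (h - 2) + 2 ^ q := by
  obtain ⟨hn2, hm0, k₁, hk11, hk1n, hones, hnext, hmono, hT⟩ := hM
  -- decomposition of large terms
  have hdec : ∀ k : ℕ, k ≤ n - 1 → 1 < m k → ∃ a b : ℕ,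
      1 ≤ a ∧ a < k ∧ 1 ≤ b ∧ b < k ∧ m a + m b = m k := by
    intro k hkn hk
    have hk0 : k ≠ 0 := by rintro rfl; omega
    have hkk1 : k₁ < k := by
      by_contra hle
      push_neg at hle
      have := hones k (by omega) hle
      omega
    obtain ⟨t₁, t₂, ht, _⟩ := hT (by omega)
    obtain ⟨h1, h2, h3, h4, h5, h6, h7⟩ := ht k hkk1 (by omega)
    exact ⟨t₁ k, t₂ k, h1, h6, h3, h7, h5⟩
  -- doubling bound
  have hdouble : ∀ k : ℕ, 1 ≤ k → k ≤ n - 1 → 1 < m k → m k ≤ 2 * m (k - 1) := by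
    intro k hk1 hkn hk
    obtain ⟨a, b, ha1, hak, hb1, hbk, hab⟩ := hdec k hkn hk
    have h1 : m a ≤ m (k - 1) := hmono a (k - 1) (by omega) (by omega)
    have h2 : m b ≤ m (k - 1) := hmono b (k - 1) (by omega) (by omega)
    omega
  -- main claim by strong induction
  have main : ∀ j : ℕ, j + 2 ≤ n - 1 → 2 ^ j < m (j + 2) →
      ∃ q : ℕ, q ≤ j ∧ m (j + 2) = 2 ^ j + 2 ^ q := by
    intro j
    induction j using Nat.strong_induction_on with
    | _ j IH =>
      match j with
      | 0 =>
        intro hjn hj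
        have h1 := hbound 2 (by omega) hjn
        norm_num at hj h1 ⊢
        omega
      | 1 =>
        intro hjn hj
        norm_num at hj
        obtain ⟨a, b, ha1, hak, hb1, hbk, hab⟩ := hdec 3 hjn (by omega)
        have hma : m a ≤ m 2 := hmono a 2 (by omega) (by omega)
        have hmb : m b ≤ m 2 := hmono b 2 (by omega) (by omega)
        have h2 : m 2 ≤ 2 ^ (2 - 1) := hbound 2 (by omega) (by omega)
        norm_num at h2
        have : m 3 = 3 ∨ m 3 = 4 := by omega
        rcases this with h | h
        · exact ⟨0, by omega, by norm_num; omega⟩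
        · exact ⟨1, by omega, by norm_num; omega⟩
      | (jj+2) =>
        intro hjn hj
        have e44 : jj + 2 + 2 = jj + 4 := by omega
        rw [e44] at hj ⊢
        have p1 : (2:ℕ) ^ (jj+1) = 2 * 2 ^ jj := by ring
        have p2 : (2:ℕ) ^ (jj+2) = 4 * 2 ^ jj := by ring
        have hpos : 0 < (2:ℕ) ^ jj := Nat.pow_pos (by norm_num)
        -- m (jj+3) > 2^(jj+1)
        have hd1 : m (jj+4) ≤ 2 * m (jj+3) := by
          have := hdouble (jj+4) (by omega) (by omega) (by omega)
          have e : jj + 4 - 1 = jj + 3 := by omega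
          rwa [e] at this
        have hmh1big : 2 ^ (jj+1) < m (jj+3) := by omega
        have hd2 : m (jj+3) ≤ 2 * m (jj+2) := by
          have := hdouble (jj+3) (by omega) (by omega) (by omega)
          have e : jj + 3 - 1 = jj + 2 := by omega
          rwa [e] at this
        have hmh2big : 2 ^ jj < m (jj+2) := by omega
        obtain ⟨b, hb, hb1⟩ := IH (jj+1) (by omega) (by omega) hmh1big
        have e32 : jj + 1 + 2 = jj + 3 := by omega
        rw [e32] at hb1
        obtain ⟨c, hc, hc1⟩ := IH jj (by omega) (by omega) hmh2big
        obtain ⟨a, b', ha1, hak, hb'1, hb'k, hab⟩ := hdec (jj+4) hjn (by omega)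
        have hble : (2:ℕ) ^ b ≤ 2 ^ (jj+1) := Nat.pow_le_pow_right (by norm_num) hb
        have hcle : (2:ℕ) ^ c ≤ 2 ^ jj := Nat.pow_le_pow_right (by norm_num) hc
        rcases Nat.lt_or_ge b (jj+1) with hblt | hbge
        · -- b ≤ jj : m (jj+3) = 2^(jj+1) + 2^b with 2^b ≤ 2^jj
          have hble' : (2:ℕ) ^ b ≤ 2 ^ jj := Nat.pow_le_pow_right (by norm_num) (by omega)
          have hma3 : m a ≤ m (jj+3) := hmono a (jj+3) (by omega) (by omega)
          have hmb3 : m b' ≤ m (jj+3) := hmono b' (jj+3) (by omega) (by omega)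
          have key : ∀ t : ℕ, 1 ≤ t → t ≤ jj + 1 → m t ≤ 2 ^ jj := by
            intro t ht1 ht2
            have h1 := hbound t ht1 (by omega)
            have h2 : (2:ℕ) ^ (t - 1) ≤ 2 ^ jj :=
              Nat.pow_le_pow_right (by norm_num) (by omega)
            omega
          have ha2 : jj + 2 ≤ a := by
            by_contra hh
            push_neg at hh
            have := key a ha1 (by omega)
            omega
          have hb2 : jj + 2 ≤ b' := by
            by_contra hh
            push_neg at hh
            have := key b' hb'1 (by omega)
            omega
          have haE : a = jj + 2 ∨ a = jj + 3 := by omega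
          have hbE : b' = jj + 2 ∨ b' = jj + 3 := by omega
          rcases haE with ha | ha <;> rcases hbE with hbb | hbb <;> subst ha <;> subst hbb
          · -- both jj+2: contradiction
            exfalso; omega
          · -- (jj+2, jj+3)
            rcases Nat.lt_or_ge b jj with hbj | hbj
            · -- b < jj: need c = jj
              have hbs : (2:ℕ) ^ (b+1) ≤ 2 ^ jj := Nat.pow_le_pow_right (by norm_num) (by omega)
              have pb : (2:ℕ) ^ (b+1) = 2 * 2 ^ b := by ring
              rcases Nat.lt_or_ge c jj with hcj | hcj
              · exfalso
                have hcs : (2:ℕ) ^ (c+1) ≤ 2 ^ jj := Nat.pow_le_pow_right (by norm_num) (by omega)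
                have pc : (2:ℕ) ^ (c+1) = 2 * 2 ^ c := by ring
                omega
              · have : c = jj := by omega
                subst this
                exact ⟨b, by omega, by omega⟩
            · have : b = jj := by omega
              subst this
              exact ⟨c, by omega, by omega⟩
          · -- (jj+3, jj+2) symmetric
            rcases Nat.lt_or_ge b jj with hbj | hbj
            · have hbs : (2:ℕ) ^ (b+1) ≤ 2 ^ jj := Nat.pow_le_pow_right (by norm_num) (by omega)
              have pb : (2:ℕ) ^ (b+1) = 2 * 2 ^ b := by ring
              rcases Nat.lt_or_ge c jj with hcj | hcj
              · exfalso
                have hcs : (2:ℕ) ^ (c+1) ≤ 2 ^ jj := Nat.pow_le_pow_right (by norm_num) (by omega)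
                have pc : (2:ℕ) ^ (c+1) = 2 * 2 ^ c := by ring
                omega
              · have : c = jj := by omega
                subst this
                exact ⟨b, by omega, by omega⟩
            · have : b = jj := by omega
              subst this
              exact ⟨c, by omega, by omega⟩
          · -- (jj+3, jj+3)
            have pb : (2:ℕ) ^ (b+1) = 2 * 2 ^ b := by ring
            exact ⟨b + 1, by omega, by omega⟩
        · -- b = jj+1 : m (jj+3) = 2^(jj+2), the maximal case
          have hbeq : b = jj + 1 := by omega
          subst hbeq
          have hfull : m (jj+3) = 2 ^ (jj + 3 - 1) := by
            have e : jj + 3 - 1 = jj + 2 := by omega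
            rw [e]; omega
          have hall := hmax (jj+3) (by omega) (by omega) hfull
          have hma := hall a ha1 (by omega)
          have hmb := hall b' hb'1 (by omega)
          rcases Nat.lt_or_ge a (jj+3) with haa | haa
          · rcases Nat.lt_or_ge b' (jj+3) with hbbb | hbbb
            · exfalso
              have h1 : (2:ℕ) ^ (a-1) ≤ 2 ^ (jj+1) :=
                Nat.pow_le_pow_right (by norm_num) (by omega)
              have h2 : (2:ℕ) ^ (b'-1) ≤ 2 ^ (jj+1) :=
                Nat.pow_le_pow_right (by norm_num) (by omega)
              omega
            · have hbeq2 : b' = jj + 3 := by omega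
              subst hbeq2
              have e : jj + 3 - 1 = jj + 2 := by omega
              rw [e] at hmb
              have h1 : (2:ℕ) ^ (a-1) ≤ 2 ^ (jj+2) :=
                Nat.pow_le_pow_right (by norm_num) (by omega)
              exact ⟨a - 1, by omega, by omega⟩
          · have haeq : a = jj + 3 := by omega
            subst haeq
            have e : jj + 3 - 1 = jj + 2 := by omega
            rw [e] at hma
            exact ⟨b' - 1, by omega, by omega⟩
  -- conclude
  intro h h4 hhn hlt
  obtain ⟨j, rfl⟩ : ∃ j : ℕ, h = j + 2 := ⟨h - 2, by omega⟩
  have e : j + 2 - 2 = j := by omega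
  rw [e] at hlt ⊢
  exact main j (by omega) hlt
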